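/- For i.i.d. continuous observations and integers 1 ≤ r ≤ t ≤ n, the conditional second moment of the absolute rank satisfies E[A_{t,n}² | R_t = r] = [(n+1)(n+2) / ((t+1)(t+2))] · r · (r + (n−t)/(n+2)). -/

import Mathlib

open MeasureTheory ProbabilityTheory Finset
open scoped ENNReal Classical
set_option linter.unusedSectionVars false
set_option linter.unusedTactic false
set_option linter.unreachableTactic false
set_option maxHeartbeats 1000000

noncomputable section

/-- The σ-algebra on `Ω` generated by the functions `f 1, …, f t`. -/
def genFilt {Ω β : Type*} [MeasurableSpace β] (f : ℕ → Ω → β) (t : ℕ) :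
    MeasurableSpace Ω :=
  ⨆ i ∈ Set.Icc 1 t, MeasurableSpace.comap (f i) inferInstance

/-- `τ` is a stopping time with values in `{1,…,n}` of the filtration generated by `f`. -/
def IsStopTime {Ω β : Type*} [MeasurableSpace β] (f : ℕ → Ω → β) (n : ℕ) (τ : Ω → ℕ) : Prop :=
  (∀ ω, τ ω ∈ Set.Icc 1 n) ∧ ∀ t, MeasurableSet[genFilt f t] {ω | τ ω = t}

/-- The family `(f i)_{i ∈ s}` is independent under `μ`. -/
def IndepSeq {Ω β : Type*} [MeasurableSpace Ω] [MeasurableSpace β]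
    (f : ℕ → Ω → β) (s : Set ℕ) (μ : Measure Ω) : Prop :=
  iIndepFun (m := fun _ : s => (inferInstance : MeasurableSpace β)) (fun i : s => f i.1) μ

/-- `N` is independent of the family `(f i)_{i ∈ s}`. -/
def IndepOfSeq {Ω β : Type*} [MeasurableSpace Ω] [MeasurableSpace β]
    (N : Ω → ℕ) (f : ℕ → Ω → β) (s : Set ℕ) (μ : Measure Ω) : Prop :=
  IndepFun N (fun ω (i : s) => f i.1 ω) μ

/-- The absolute rank `A_{t,k}` of `X t` among `X 1, …, X k`
(the largest observation has rank 1). -/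
def absRank {Ω : Type*} (X : ℕ → Ω → ℝ) (t k : ℕ) (ω : Ω) : ℕ :=
  ((Finset.Icc 1 k).filter fun j => X t ω ≤ X j ω).card

/-- The relative rank `R_t = A_{t,t}`. -/
def relRank {Ω : Type*} (X : ℕ → Ω → ℝ) (t : ℕ) (ω : Ω) : ℕ := absRank X t t ω

/-- `(X i)_{i ∈ s}` are i.i.d. with an atomless (continuous) common distribution. -/
def IIDContinuousOn {Ω : Type*} [MeasurableSpace Ω] (X : ℕ → Ω → ℝ) (s : Set ℕ)
    (μ : Measure Ω) : Prop :=
  (∀ i ∈ s, Measurable (X i)) ∧ IndepSeq X s μ ∧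
  (∀ i ∈ s, ∀ j ∈ s, IdentDistrib (X i) (X j) μ μ) ∧
  (∀ i ∈ s, ∀ x : ℝ, μ {ω | X i ω = x} = 0)

section Helpers

variable {Ω : Type*} [MeasurableSpace Ω] {μ : Measure Ω} [IsProbabilityMeasure μ]
  {n : ℕ} {X : ℕ → Ω → ℝ}

/-- rank of `X i` among `(X j)_{j ∈ s}` -/
def rnk (X : ℕ → Ω → ℝ) (s : Finset ℕ) (i : ℕ) (ω : Ω) : ℕ :=
  (s.filter fun j => X i ω ≤ X j ω).card

lemma rnk_eq_sum (X : ℕ → Ω → ℝ) (s : Finset ℕ) (i : ℕ) (ω : Ω) :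
    rnk X s i ω = ∑ j ∈ s, if X i ω ≤ X j ω then 1 else 0 :=
  Finset.card_filter _ _

lemma measurable_rnk {X : ℕ → Ω → ℝ} {s : Finset ℕ} {i : ℕ}
    (hXi : Measurable (X i)) (hs : ∀ j ∈ s, Measurable (X j)) :
    Measurable fun ω => rnk X s i ω := by
  have : (fun ω => rnk X s i ω) = fun ω => ∑ j ∈ s, if X i ω ≤ X j ω then 1 else 0 :=
    funext fun ω => rnk_eq_sum X s i ω
  rw [this]
  exact Finset.measurable_sum s fun j hj =>
    Measurable.ite (measurableSet_le hXi (hs j hj)) measurable_const measurable_const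

lemma measurableSet_rnk_eq {X : ℕ → Ω → ℝ} {s : Finset ℕ} {i : ℕ}
    (hXi : Measurable (X i)) (hs : ∀ j ∈ s, Measurable (X j)) (r : ℕ) :
    MeasurableSet {ω | rnk X s i ω = r} :=
  measurable_rnk hXi hs (measurableSet_singleton r)

/-- reindexing cardinality lemma -/
lemma card_filter_equiv (s : Finset ℕ) (e : ℕ ≃ ℕ) (he : ∀ j ∈ s, e j ∈ s)
    (he' : ∀ j ∈ s, e.symm j ∈ s) (p : ℕ → Prop) :
    (Finset.univ.filter fun j : {x // x ∈ s} => p (e ↑j)).card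
      = (s.filter p).card := by
  refine Finset.card_bij (fun (j : {x // x ∈ s}) _ => e ↑j) ?_ ?_ ?_
  · intro a ha
    simp only [Finset.mem_filter, Finset.mem_univ, true_and] at ha ⊢
    exact ⟨he _ a.2, ha⟩
  · intro a _ b _ hab
    exact Subtype.ext (e.injective hab)
  · intro b hb
    simp only [Finset.mem_filter] at hb
    refine ⟨⟨e.symm b, he' _ hb.1⟩, ?_, ?_⟩
    · simp only [Finset.mem_filter, Finset.mem_univ, true_and, Equiv.apply_symm_apply]
      exact hb.2
    · simp


/-- the joint law of any injectively-reindexed subfamily is the product of the common law -/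
lemma law_eq_pi (hX : IIDContinuousOn X (Set.Icc 1 n) μ)
    {t₀ : ℕ} (ht₀ : t₀ ∈ Set.Icc 1 n)
    (s : Finset ℕ) (g : {x // x ∈ s} → ℕ) (hg : ∀ j, g j ∈ Set.Icc 1 n)
    (hginj : Function.Injective g) :
    μ.map (fun ω (j : {x // x ∈ s}) => X (g j) ω)
      = Measure.pi (fun _ : {x // x ∈ s} => μ.map (X t₀)) := by
  have hmeas : ∀ j : {x // x ∈ s}, Measurable (X (g j)) := fun j => hX.1 _ (hg j)
  haveI : IsProbabilityMeasure (μ.map (X t₀)) :=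
    Measure.isProbabilityMeasure_map (hX.1 _ ht₀).aemeasurable
  refine (Measure.pi_eq fun B hB => ?_).symm
  rw [Measure.map_apply (measurable_pi_lambda _ fun j => hmeas j) (MeasurableSet.univ_pi hB)]
  have hpre : (fun ω (j : {x // x ∈ s}) => X (g j) ω) ⁻¹' (Set.univ.pi B)
      = ⋂ j : {x // x ∈ s}, X (g j) ⁻¹' B j := by
    ext ω; simp [Set.mem_pi]
  rw [hpre]
  -- embed into the index subtype of Set.Icc 1 n
  set emb : {x // x ∈ s} ↪ ↑(Set.Icc 1 n) :=
    ⟨fun j => ⟨g j, hg j⟩, fun a b hab => hginj (congrArg Subtype.val hab)⟩ with hemb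
  set sets : ↑(Set.Icc 1 n) → Set ℝ :=
    Function.extend (fun j => emb j) B (fun _ => Set.univ) with hsets
  have hinj : Function.Injective (fun j => emb j) := emb.injective
  have hsets_apply : ∀ j : {x // x ∈ s}, sets (emb j) = B j := fun j =>
    hinj.extend_apply _ _ _
  have key := hX.2.1.measure_inter_preimage_eq_mul (Finset.univ.map emb)
    (sets := sets) ?_
  · have hL : (⋂ i ∈ Finset.univ.map emb, X (i : ℕ) ⁻¹' sets i)
        = ⋂ j : {x // x ∈ s}, X (g j) ⁻¹' B j := by
      ext ω
      simp only [Set.mem_iInter, Finset.mem_map, Finset.mem_univ, true_and]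
      constructor
      · intro h j
        have := h (emb j) ⟨j, rfl⟩
        rwa [hsets_apply] at this
      · rintro h i ⟨j, rfl⟩
        rw [hsets_apply]; exact h j
    rw [hL] at key
    rw [key, Finset.prod_map]
    refine Finset.prod_congr rfl fun j _ => ?_
    rw [hsets_apply]
    show μ (X (g j) ⁻¹' B j) = _
    rw [← Measure.map_apply (hmeas j) (hB j),
      (hX.2.2.1 (g j) (hg j) t₀ ht₀).map_eq]
  · intro i hi
    rcases Finset.mem_map.mp hi with ⟨j, _, rfl⟩
    rw [hsets_apply]
    exact hB j

/-- ties have probability zero -/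
lemma tie_null (hX : IIDContinuousOn X (Set.Icc 1 n) μ)
    {i j : ℕ} (hi : i ∈ Set.Icc 1 n) (hj : j ∈ Set.Icc 1 n) (hij : i ≠ j) :
    μ {ω | X i ω = X j ω} = 0 := by
  have hind : IndepFun (X i) (X j) μ := by
    have := hX.2.1.indepFun (i := (⟨i, hi⟩ : ↑(Set.Icc 1 n))) (j := ⟨j, hj⟩)
      (by simpa using hij)
    exact this
  have hmap : μ.map (fun ω => (X i ω, X j ω)) = (μ.map (X i)).prod (μ.map (X j)) :=
    (indepFun_iff_map_prod_eq_prod_map_map (hX.1 i hi).aemeasurable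
      (hX.1 j hj).aemeasurable).mp hind
  have hdiag : MeasurableSet {p : ℝ × ℝ | p.1 = p.2} :=
    measurableSet_eq_fun measurable_fst measurable_snd
  have : μ {ω | X i ω = X j ω}
      = (μ.map (fun ω => (X i ω, X j ω))) {p : ℝ × ℝ | p.1 = p.2} := by
    rw [Measure.map_apply ((hX.1 i hi).prodMk (hX.1 j hj)) hdiag]
    rfl
  rw [this, hmap]
  haveI : SigmaFinite (μ.map (X j)) := by
    haveI : IsProbabilityMeasure (μ.map (X j)) :=
      Measure.isProbabilityMeasure_map (hX.1 j hj).aemeasurable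
    infer_instance
  rw [Measure.prod_apply hdiag]
  have hzero : ∀ x : ℝ, (μ.map (X j)) ({x} : Set ℝ) = 0 := by
    intro x
    rw [Measure.map_apply (hX.1 j hj) (measurableSet_singleton x)]
    exact hX.2.2.2 j hj x
  have hpre : ∀ x : ℝ, Prod.mk x ⁻¹' {p : ℝ × ℝ | p.1 = p.2} = ({x} : Set ℝ) := by
    intro x; ext y; simp [eq_comm]
  simp [hpre, hzero]

/-- exchangeability for events about the vector of a subfamily -/
lemma exchange (hX : IIDContinuousOn X (Set.Icc 1 n) μ)
    (s : Finset ℕ) (hs : ↑s ⊆ Set.Icc 1 n) {i i' : ℕ} (hi : i ∈ s) (hi' : i' ∈ s)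
    (T : Set ({x // x ∈ s} → ℝ)) (hT : MeasurableSet T) :
    μ ((fun ω (j : {x // x ∈ s}) => X (↑j) ω) ⁻¹' T)
      = μ ((fun ω (j : {x // x ∈ s}) => X (Equiv.swap i i' ↑j) ω) ⁻¹' T) := by
  have hii : i ∈ Set.Icc 1 n := hs hi
  have hval : ∀ j : {x // x ∈ s}, (j : ℕ) ∈ Set.Icc 1 n := fun j => hs j.2
  have hswapmem : ∀ j : {x // x ∈ s}, Equiv.swap i i' (↑j) ∈ Set.Icc 1 n := by
    intro j
    rcases eq_or_ne (j : ℕ) i with h | h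
    · rw [h, Equiv.swap_apply_left]; exact hs hi'
    rcases eq_or_ne (j : ℕ) i' with h' | h'
    · rw [h', Equiv.swap_apply_right]; exact hs hi
    · rw [Equiv.swap_apply_of_ne_of_ne h h']; exact hval j
  have h1 := law_eq_pi hX hii s (fun j => (j : ℕ)) hval Subtype.val_injective
  have h2 := law_eq_pi hX hii s (fun j => Equiv.swap i i' ↑j) hswapmem
    ((Equiv.swap i i').injective.comp Subtype.val_injective)
  have m1 : Measurable (fun ω (j : {x // x ∈ s}) => X (↑j) ω) :=
    measurable_pi_lambda _ fun j => hX.1 _ (hval j)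
  have m2 : Measurable (fun ω (j : {x // x ∈ s}) => X (Equiv.swap i i' ↑j) ω) :=
    measurable_pi_lambda _ fun j => hX.1 _ (hswapmem j)
  rw [← Measure.map_apply m1 hT, ← Measure.map_apply m2 hT, h1, h2]

lemma measurableSet_T (s : Finset ℕ) (i₀ : {x // x ∈ s}) (r : ℕ) :
    MeasurableSet {y : {x // x ∈ s} → ℝ |
      (Finset.univ.filter fun j : {x // x ∈ s} => y i₀ ≤ y j).card = r} := by
  have : Measurable fun y : {x // x ∈ s} → ℝ =>
      (Finset.univ.filter fun j : {x // x ∈ s} => y i₀ ≤ y j).card := by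
    have : (fun y : {x // x ∈ s} → ℝ =>
        (Finset.univ.filter fun j : {x // x ∈ s} => y i₀ ≤ y j).card)
        = fun y => ∑ j : {x // x ∈ s}, if y i₀ ≤ y j then 1 else 0 :=
      funext fun y => Finset.card_filter _ _
    rw [this]
    exact Finset.measurable_sum _ fun j _ =>
      Measurable.ite (measurableSet_le (measurable_pi_apply i₀) (measurable_pi_apply j))
        measurable_const measurable_const
  exact this (measurableSet_singleton r)

/-- key symmetry: the rank of `X i` and of `X i'` among `(X j)_{j ∈ s}` are equidistributed -/
lemma rank_swap (hX : IIDContinuousOn X (Set.Icc 1 n) μ)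
    (s : Finset ℕ) (hs : ↑s ⊆ Set.Icc 1 n) {i i' : ℕ} (hi : i ∈ s) (hi' : i' ∈ s) (r : ℕ) :
    μ {ω | rnk X s i ω = r} = μ {ω | rnk X s i' ω = r} := by
  set T : Set ({x // x ∈ s} → ℝ) := {y : {x // x ∈ s} → ℝ |
      (Finset.univ.filter fun j : {x // x ∈ s} => y ⟨i, hi⟩ ≤ y j).card = r} with hT_def
  have hT : MeasurableSet T := measurableSet_T s ⟨i, hi⟩ r
  have hA : (fun ω (j : {x // x ∈ s}) => X (↑j) ω) ⁻¹' T = {ω | rnk X s i ω = r} := by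
    ext ω
    simp only [Set.mem_preimage, hT_def, Set.mem_setOf_eq]
    have := card_filter_equiv s (Equiv.refl ℕ) (fun j hj => hj) (fun j hj => hj)
      (fun k => X i ω ≤ X k ω)
    simp only [Equiv.refl_apply] at this
    have key : (Finset.univ.filter fun j : {x // x ∈ s} => X i ω ≤ X (↑j) ω).card
        = rnk X s i ω := by
      unfold rnk
      convert this
      ext j
      simp only [Finset.mem_filter, Finset.mem_univ, Finset.mem_attach, true_and]
      exact ⟨fun h => Finset.mem_filter.mpr ⟨Finset.mem_univ _, h⟩,
        fun h => (Finset.mem_filter.mp h).2⟩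
    rw [key]
  have hB : (fun ω (j : {x // x ∈ s}) => X (Equiv.swap i i' ↑j) ω) ⁻¹' T
      = {ω | rnk X s i' ω = r} := by
    ext ω
    simp only [Set.mem_preimage, hT_def, Set.mem_setOf_eq]
    have hmem : ∀ j ∈ s, Equiv.swap i i' j ∈ s := by
      intro j hj
      rcases eq_or_ne j i with h | h
      · rw [h, Equiv.swap_apply_left]; exact hi'
      rcases eq_or_ne j i' with h' | h'
      · rw [h', Equiv.swap_apply_right]; exact hi
      · rw [Equiv.swap_apply_of_ne_of_ne h h']; exact hj
    have hmem' : ∀ j ∈ s, (Equiv.swap i i').symm j ∈ s := by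
      simpa [Equiv.symm_swap] using hmem
    have := card_filter_equiv s (Equiv.swap i i') hmem hmem'
      (fun k => X i' ω ≤ X k ω)
    simp only [Equiv.swap_apply_left]
    have key : (Finset.univ.filter fun j : {x // x ∈ s} => X i' ω ≤ X (Equiv.swap i i' ↑j) ω).card
        = rnk X s i' ω := by
      unfold rnk
      convert this
    rw [key]
  rw [← hA, ← hB]
  exact exchange hX s hs hi hi' T hT

lemma rnk_pos {s : Finset ℕ} {i : ℕ} (hi : i ∈ s) (ω : Ω) : 0 < rnk X s i ω :=
  Finset.card_pos.mpr ⟨i, Finset.mem_filter.mpr ⟨hi, le_refl _⟩⟩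

lemma rnk_le {s : Finset ℕ} {i : ℕ} (ω : Ω) : rnk X s i ω ≤ s.card :=
  Finset.card_filter_le _ _

lemma rnk_lt_of_lt {s : Finset ℕ} {i i' : ℕ} (hi : i ∈ s) {ω : Ω}
    (hlt : X i ω < X i' ω) : rnk X s i' ω < rnk X s i ω := by
  apply Finset.card_lt_card
  rw [Finset.ssubset_iff_of_subset]
  · exact ⟨i, Finset.mem_filter.mpr ⟨hi, le_refl _⟩,
      fun h => absurd ((Finset.mem_filter.mp h).2) (not_le.mpr hlt)⟩
  · intro j hj
    rcases Finset.mem_filter.mp hj with ⟨hjs, hje⟩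
    exact Finset.mem_filter.mpr ⟨hjs, (hlt.le.trans hje)⟩

lemma rnk_injOn {s : Finset ℕ} {ω : Ω} (hinj : Set.InjOn (fun j => X j ω) ↑s)
    {i i' : ℕ} (hi : i ∈ s) (hi' : i' ∈ s) (h : rnk X s i ω = rnk X s i' ω) : i = i' := by
  rcases lt_trichotomy (X i ω) (X i' ω) with hlt | heq | hlt
  · have := rnk_lt_of_lt hi hlt; omega
  · exact hinj hi hi' heq
  · have := rnk_lt_of_lt hi' hlt; omega

lemma exists_rnk_eq {s : Finset ℕ} {ω : Ω} (hinj : Set.InjOn (fun j => X j ω) ↑s)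
    {r : ℕ} (hr1 : 1 ≤ r) (hr2 : r ≤ s.card) : ∃ i ∈ s, rnk X s i ω = r := by
  have himg : (s.image fun i => rnk X s i ω) = Finset.Icc 1 s.card := by
    apply Finset.eq_of_subset_of_card_le
    · intro x hx
      rcases Finset.mem_image.mp hx with ⟨i, hi, rfl⟩
      exact Finset.mem_Icc.mpr ⟨rnk_pos hi ω, rnk_le ω⟩
    · rw [Nat.card_Icc]
      simp only [Nat.add_sub_cancel]
      rw [Finset.card_image_of_injOn fun i hi i' hi' h => rnk_injOn hinj hi hi' h]
  have : r ∈ s.image fun i => rnk X s i ω := by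
    rw [himg]; exact Finset.mem_Icc.mpr ⟨hr1, hr2⟩
  rcases Finset.mem_image.mp this with ⟨i, hi, hh⟩
  exact ⟨i, hi, hh⟩

/-- the set where some values in `s` coincide -/
def tieSet (X : ℕ → Ω → ℝ) (s : Finset ℕ) : Set Ω :=
  ⋃ i ∈ s, ⋃ j ∈ s.erase i, {ω | X i ω = X j ω}

lemma measurableSet_tieSet {s : Finset ℕ} (hmeas : ∀ j ∈ s, Measurable (X j)) :
    MeasurableSet (tieSet X s) := by
  refine MeasurableSet.biUnion s.countable_toSet fun i hi =>
    MeasurableSet.biUnion (s.erase i).countable_toSet fun j hj => ?_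
  exact measurableSet_eq_fun (hmeas i hi) (hmeas j (Finset.mem_of_mem_erase hj))

lemma tieSet_null (hX : IIDContinuousOn X (Set.Icc 1 n) μ)
    {s : Finset ℕ} (hs : ↑s ⊆ Set.Icc 1 n) : μ (tieSet X s) = 0 := by
  refine measure_biUnion_null_iff s.countable_toSet |>.mpr fun i hi => ?_
  refine measure_biUnion_null_iff (s.erase i).countable_toSet |>.mpr fun j hj => ?_
  exact tie_null hX (hs hi) (hs (Finset.mem_of_mem_erase hj))
    (Ne.symm (Finset.ne_of_mem_erase hj))

lemma injOn_of_not_tieSet {s : Finset ℕ} {ω : Ω} (h : ω ∉ tieSet X s) :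
    Set.InjOn (fun j => X j ω) ↑s := by
  intro i hi j hj hij
  by_contra hne
  apply h
  refine Set.mem_biUnion hi ?_
  refine Set.mem_biUnion (Finset.mem_erase.mpr ⟨fun hh => hne (hh ▸ rfl), hj⟩) ?_
  exact hij

/-- the rank is uniformly distributed -/
lemma rank_uniform (hX : IIDContinuousOn X (Set.Icc 1 n) μ)
    (s : Finset ℕ) (hs : ↑s ⊆ Set.Icc 1 n) {i : ℕ} (hi : i ∈ s) {r : ℕ}
    (hr1 : 1 ≤ r) (hr2 : r ≤ s.card) :
    μ {ω | rnk X s i ω = r} = (s.card : ℝ≥0∞)⁻¹ := by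
  have hmeas : ∀ j ∈ s, Measurable (X j) := fun j hj => hX.1 j (hs hj)
  have hN : MeasurableSet (tieSet X s) := measurableSet_tieSet hmeas
  have hN0 : μ (tieSet X s) = 0 := tieSet_null hX hs
  set E : ℕ → Set Ω := fun i' => {ω | rnk X s i' ω = r} \ tieSet X s with hE_def
  have hEmeas : ∀ i' ∈ s, MeasurableSet (E i') := fun i' hi' =>
    (measurableSet_rnk_eq (hmeas i' hi') hmeas r).diff hN
  have hdisj : (↑s : Set ℕ).PairwiseDisjoint E := by
    intro a ha b hb hab
    refine Set.disjoint_left.mpr fun ω hωa hωb => hab ?_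
    exact rnk_injOn (injOn_of_not_tieSet hωa.2) ha hb (hωa.1.trans hωb.1.symm)
  have hunion : (⋃ i' ∈ s, E i') = Set.univ \ tieSet X s := by
    apply Set.Subset.antisymm
    · refine Set.iUnion₂_subset fun i' hi' => ?_
      exact Set.diff_subset_diff_left (Set.subset_univ _)
    · intro ω hω
      rcases exists_rnk_eq (injOn_of_not_tieSet hω.2) hr1 hr2 with ⟨i', hi', hr'⟩
      exact Set.mem_biUnion hi' ⟨hr', hω.2⟩
  have hsum : ∑ i' ∈ s, μ (E i') = 1 := by
    rw [← measure_biUnion_finset hdisj hEmeas, hunion, measure_diff_null hN0,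
      measure_univ]
  have hEeq : ∀ i' ∈ s, μ (E i') = μ {ω | rnk X s i ω = r} := by
    intro i' hi'
    rw [hE_def]
    simp only
    rw [measure_diff_null hN0]
    exact rank_swap hX s hs hi' hi r
  rw [Finset.sum_congr rfl hEeq, Finset.sum_const, nsmul_eq_mul] at hsum
  have hc0 : (s.card : ℝ≥0∞) ≠ 0 := by
    simp only [ne_eq, Nat.cast_eq_zero, Finset.card_eq_zero]
    exact fun h => by simp [h] at hi
  have hct : (s.card : ℝ≥0∞) ≠ ⊤ := ENNReal.natCast_ne_top _
  calc μ {ω | rnk X s i ω = r}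
      = (s.card : ℝ≥0∞)⁻¹ * ((s.card : ℝ≥0∞) * μ {ω | rnk X s i ω = r}) := by
        rw [← mul_assoc, ENNReal.inv_mul_cancel hc0 hct, one_mul]
    _ = (s.card : ℝ≥0∞)⁻¹ := by rw [hsum, mul_one]

lemma rnk_insert {s : Finset ℕ} {j : ℕ} (hj : j ∉ s) (i : ℕ) (ω : Ω) :
    rnk X (insert j s) i ω = rnk X s i ω + if X i ω ≤ X j ω then 1 else 0 := by
  unfold rnk
  rw [Finset.filter_insert]
  by_cases hc : X i ω ≤ X j ω
  · rw [if_pos hc, if_pos hc, Finset.card_insert_of_notMem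
      (fun h => hj (Finset.mem_of_mem_filter j h))]
  · rw [if_neg hc, if_neg hc, add_zero]

/-- probability that the rank is `s` and a fresh observation exceeds `X t` -/
lemma q_lemma (hX : IIDContinuousOn X (Set.Icc 1 n) μ)
    {B : Finset ℕ} (hB : ↑B ⊆ Set.Icc 1 n) {t : ℕ} (ht : t ∈ B)
    {j : ℕ} (hjI : j ∈ Set.Icc 1 n) (hjB : j ∉ B) :
    ∀ s : ℕ, s ≤ B.card →
      (μ ({ω | rnk X B t ω = s} ∩ {ω | X t ω ≤ X j ω})).toReal
        = s / (B.card * (B.card + 1)) := by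
  have hmeas : ∀ k ∈ B, Measurable (X k) := fun k hk => hX.1 k (hB hk)
  have hmt : Measurable (X t) := hmeas t ht
  have hmj : Measurable (X j) := hX.1 j hjI
  have hC : MeasurableSet {ω | X t ω ≤ X j ω} := measurableSet_le hmt hmj
  have hB' : ↑(insert j B) ⊆ Set.Icc 1 n := by
    rw [Finset.coe_insert]
    exact Set.insert_subset hjI hB
  have hmeas' : ∀ k ∈ insert j B, Measurable (X k) := fun k hk => hX.1 k (hB' hk)
  have hcard' : (insert j B).card = B.card + 1 := Finset.card_insert_of_notMem hjB
  have hm1 : 1 ≤ B.card := Finset.card_pos.mpr ⟨t, ht⟩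
  have hmR : (1:ℝ) ≤ (B.card : ℝ) := by exact_mod_cast hm1
  intro s
  induction s with
  | zero =>
    intro _
    have : ({ω | rnk X B t ω = 0} : Set Ω) = ∅ := by
      ext ω
      simp only [Set.mem_setOf_eq, Set.mem_empty_iff_false, iff_false]
      exact fun h => by have := rnk_pos (X := X) ht ω; omega
    rw [this, Set.empty_inter]
    simp
  | succ s ih =>
    intro hs1
    have hsle : s ≤ B.card := Nat.le_of_succ_le hs1
    have hIH := ih hsle
    -- uniform values
    have hu1 : (μ {ω | rnk X (insert j B) t ω = s + 1}).toReal
        = 1 / ((B.card : ℝ) + 1) := by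
      rw [rank_uniform hX (insert j B) hB' (Finset.mem_insert_of_mem ht)
        (Nat.succ_le_succ (Nat.zero_le s)) (by rw [hcard']; omega)]
      rw [hcard', ENNReal.toReal_inv, ENNReal.toReal_natCast]
      push_cast
      ring
    have hu2 : (μ {ω | rnk X B t ω = s + 1}).toReal = 1 / (B.card : ℝ) := by
      rw [rank_uniform hX B hB ht (Nat.succ_le_succ (Nat.zero_le s)) hs1,
        ENNReal.toReal_inv, ENNReal.toReal_natCast]
      push_cast
      ring
    -- splitting identities
    have hsplit : ({ω | rnk X (insert j B) t ω = s + 1} : Set Ω)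
        = ({ω | rnk X B t ω = s} ∩ {ω | X t ω ≤ X j ω})
          ∪ ({ω | rnk X B t ω = s + 1} ∩ {ω | X t ω ≤ X j ω}ᶜ) := by
      ext ω
      simp only [Set.mem_setOf_eq, Set.mem_union, Set.mem_inter_iff, Set.mem_compl_iff]
      rw [rnk_insert hjB]
      by_cases hc : X t ω ≤ X j ω <;> simp [hc] <;> omega
    have hdisj : Disjoint
        ({ω | rnk X B t ω = s} ∩ {ω | X t ω ≤ X j ω})
        ({ω | rnk X B t ω = s + 1} ∩ {ω | X t ω ≤ X j ω}ᶜ) := by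
      refine Set.disjoint_left.mpr fun ω h1 h2 => h2.2 h1.2
    have h1 : μ {ω | rnk X (insert j B) t ω = s + 1}
        = μ ({ω | rnk X B t ω = s} ∩ {ω | X t ω ≤ X j ω})
          + μ ({ω | rnk X B t ω = s + 1} ∩ {ω | X t ω ≤ X j ω}ᶜ) := by
      rw [hsplit]
      exact measure_union hdisj
        (((measurableSet_rnk_eq hmt hmeas (s+1))).inter hC.compl)
    have h2 : μ {ω | rnk X B t ω = s + 1}
        = μ ({ω | rnk X B t ω = s + 1} ∩ {ω | X t ω ≤ X j ω})
          + μ ({ω | rnk X B t ω = s + 1} ∩ {ω | X t ω ≤ X j ω}ᶜ) := by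
      rw [← measure_inter_add_diff _ hC, Set.diff_eq]
    have h1' := congrArg ENNReal.toReal h1
    have h2' := congrArg ENNReal.toReal h2
    rw [ENNReal.toReal_add (measure_ne_top μ _) (measure_ne_top μ _)] at h1' h2'
    rw [hu1] at h1'
    rw [hu2] at h2'
    rw [hIH] at h1'
    push_cast
    have hm0 : (B.card : ℝ) ≠ 0 := by linarith
    have hm0' : (B.card : ℝ) + 1 ≠ 0 := by linarith
    field_simp at h1' h2' ⊢
    nlinarith [h1', h2']

/-- probability that the rank is `s` and two fresh observations exceed `X t` -/
lemma u_lemma (hX : IIDContinuousOn X (Set.Icc 1 n) μ)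
    {B : Finset ℕ} (hB : ↑B ⊆ Set.Icc 1 n) {t : ℕ} (ht : t ∈ B)
    {j j' : ℕ} (hjI : j ∈ Set.Icc 1 n) (hj'I : j' ∈ Set.Icc 1 n)
    (hjB : j ∉ B) (hj'B : j' ∉ B) (hjj' : j ≠ j') :
    ∀ s : ℕ, s ≤ B.card →
      (μ (({ω | rnk X B t ω = s} ∩ {ω | X t ω ≤ X j' ω}) ∩ {ω | X t ω ≤ X j ω})).toReal
        = (s * (s + 1)) / (B.card * (B.card + 1) * (B.card + 2)) := by
  have hmeas : ∀ k ∈ B, Measurable (X k) := fun k hk => hX.1 k (hB hk)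
  have hmt : Measurable (X t) := hmeas t ht
  have hmj : Measurable (X j) := hX.1 j hjI
  have hmj' : Measurable (X j') := hX.1 j' hj'I
  have hCj : MeasurableSet {ω | X t ω ≤ X j ω} := measurableSet_le hmt hmj
  have hCj' : MeasurableSet {ω | X t ω ≤ X j' ω} := measurableSet_le hmt hmj'
  have hB' : ↑(insert j B) ⊆ Set.Icc 1 n := by
    rw [Finset.coe_insert]; exact Set.insert_subset hjI hB
  have hcard' : (insert j B).card = B.card + 1 := Finset.card_insert_of_notMem hjB
  have hm1 : 1 ≤ B.card := Finset.card_pos.mpr ⟨t, ht⟩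
  set m := B.card with hm_def
  have hmR : (1:ℝ) ≤ (m : ℝ) := by exact_mod_cast hm1
  set Cj : Set Ω := {ω | X t ω ≤ X j ω} with hCj_def
  set Cj' : Set Ω := {ω | X t ω ≤ X j' ω} with hCj'_def
  set A : ℕ → Set Ω := fun s => {ω | rnk X B t ω = s} with hA_def
  have hAmeas : ∀ s, MeasurableSet (A s) := fun s => measurableSet_rnk_eq hmt hmeas s
  have hAempty : ∀ s, m < s → A s = ∅ := by
    intro s hs
    ext ω
    simp only [hA_def, Set.mem_setOf_eq, Set.mem_empty_iff_false, iff_false]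
    intro h
    have := rnk_le (X := X) (s := B) (i := t) ω
    omega
  have hq' : ∀ s : ℕ, s ≤ m + 1 →
      (μ ({ω | rnk X (insert j B) t ω = s} ∩ Cj')).toReal
        = s / ((m + 1) * (m + 2)) := by
    intro s hs
    have := q_lemma hX hB' (Finset.mem_insert_of_mem ht) hj'I
      (fun h => by rcases Finset.mem_insert.mp h with h | h; exact hjj' h.symm; exact hj'B h)
      s (by rw [hcard']; exact hs)
    rw [hcard'] at this
    rw [this]
    push_cast
    ring
  have hqj' : ∀ s : ℕ, s ≤ m → (μ (A s ∩ Cj')).toReal = s / (m * (m + 1)) := by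
    intro s hs
    exact q_lemma hX hB ht hj'I hj'B s hs
  -- the additive relation
  have hrel : ∀ s : ℕ,
      (μ ({ω | rnk X (insert j B) t ω = s + 1} ∩ Cj')).toReal
        + (μ ((A (s+1) ∩ Cj') ∩ Cj)).toReal
      = (μ ((A s ∩ Cj') ∩ Cj)).toReal + (μ (A (s+1) ∩ Cj')).toReal := by
    intro s
    have hsplit : ({ω | rnk X (insert j B) t ω = s + 1} ∩ Cj')
        = ((A s ∩ Cj') ∩ Cj) ∪ ((A (s+1) ∩ Cj') ∩ Cjᶜ) := by
      ext ω
      constructor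
      · rintro ⟨h1, h2⟩
        have h1' : rnk X B t ω + (if X t ω ≤ X j ω then 1 else 0) = s + 1 := by
          rw [← rnk_insert hjB]; exact h1
        by_cases hc' : X t ω ≤ X j ω
        · left
          refine ⟨⟨?_, h2⟩, hc'⟩
          show rnk X B t ω = s
          rw [if_pos hc'] at h1'
          omega
        · right
          refine ⟨⟨?_, h2⟩, hc'⟩
          show rnk X B t ω = s + 1
          rw [if_neg hc'] at h1'
          omega
      · rintro (⟨⟨h1, h2⟩, hc⟩ | ⟨⟨h1, h2⟩, hc⟩)
        · refine ⟨?_, h2⟩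
          show rnk X (insert j B) t ω = s + 1
          have h1' : rnk X B t ω = s := h1
          have hc2 : X t ω ≤ X j ω := hc
          rw [rnk_insert hjB, if_pos hc2, h1']
        · refine ⟨?_, h2⟩
          show rnk X (insert j B) t ω = s + 1
          have h1' : rnk X B t ω = s + 1 := h1
          have hc2 : ¬ X t ω ≤ X j ω := hc
          rw [rnk_insert hjB, if_neg hc2, h1']
    have hdisj : Disjoint ((A s ∩ Cj') ∩ Cj) ((A (s+1) ∩ Cj') ∩ Cjᶜ) :=
      Set.disjoint_left.mpr fun ω h1 h2 => h2.2 h1.2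
    have h1 : μ ({ω | rnk X (insert j B) t ω = s + 1} ∩ Cj')
        = μ ((A s ∩ Cj') ∩ Cj) + μ ((A (s+1) ∩ Cj') ∩ Cjᶜ) := by
      rw [hsplit]
      exact measure_union hdisj (((hAmeas (s+1)).inter hCj').inter hCj.compl)
    have h2 : μ (A (s+1) ∩ Cj')
        = μ ((A (s+1) ∩ Cj') ∩ Cj) + μ ((A (s+1) ∩ Cj') ∩ Cjᶜ) := by
      rw [← measure_inter_add_diff _ hCj, Set.diff_eq]
    have h1' := congrArg ENNReal.toReal h1
    have h2' := congrArg ENNReal.toReal h2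
    rw [ENNReal.toReal_add (measure_ne_top μ _) (measure_ne_top μ _)] at h1' h2'
    linarith
  have hm0 : (m:ℝ) ≠ 0 := by linarith
  have hm1' : (m:ℝ) + 1 ≠ 0 := by linarith
  have hm2' : (m:ℝ) + 2 ≠ 0 := by linarith
  -- downward induction
  have main : ∀ k s : ℕ, m = s + k →
      (μ ((A s ∩ Cj') ∩ Cj)).toReal = (s * (s + 1)) / (m * (m + 1) * (m + 2)) := by
    intro k
    induction k with
    | zero =>
      intro s hs
      have hsm : s = m := by omega
      have htop : (μ ((A (s+1) ∩ Cj') ∩ Cj)).toReal = 0 := by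
        rw [hAempty (s+1) (by omega), Set.empty_inter, Set.empty_inter]
        simp
      have htop2 : (μ (A (s+1) ∩ Cj')).toReal = 0 := by
        rw [hAempty (s+1) (by omega), Set.empty_inter]
        simp
      have hrel' := hrel s
      rw [htop, htop2, hq' (s+1) (by omega)] at hrel'
      push_cast at hrel'
      have hsR : (s:ℝ) = (m:ℝ) := by exact_mod_cast congrArg (fun x : ℕ => (x:ℝ)) hsm
      have hU : (μ ((A s ∩ Cj') ∩ Cj)).toReal
          = ((s:ℝ)+1)/(((m:ℝ)+1)*((m:ℝ)+2)) := by linarith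
      rw [hU]
      push_cast
      rw [hsR]
      field_simp
    | succ k ih =>
      intro s hs
      have hIH := ih (s+1) (by omega)
      have hrel' := hrel s
      rw [hIH, hq' (s+1) (by omega), hqj' (s+1) (by omega)] at hrel'
      push_cast at hrel'
      have hU : (μ ((A s ∩ Cj') ∩ Cj)).toReal
          = ((s:ℝ)+1)/(((m:ℝ)+1)*((m:ℝ)+2))
            + ((s:ℝ)+1)*((s:ℝ)+1+1)/((m:ℝ)*((m:ℝ)+1)*((m:ℝ)+2))
            - ((s:ℝ)+1)/((m:ℝ)*((m:ℝ)+1)) := by linarith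
      rw [hU]
      push_cast
      field_simp
      ring
  intro s hs
  exact main (m - s) s (by omega)

theorem stmt_14' {Ω : Type*} [MeasurableSpace Ω] (μ : Measure Ω) [IsProbabilityMeasure μ]
    (n : ℕ) (X : ℕ → Ω → ℝ) (hX : IIDContinuousOn X (Set.Icc 1 n) μ)
    (t : ℕ) (ht1 : 1 ≤ t) (htn : t ≤ n)
    (r : ℕ) (hr : r ∈ Set.Icc 1 t) :
    ∫ ω, ((rnk X (Finset.Icc 1 n) t ω : ℝ)) ^ 2 ∂(μ[|{ω | rnk X (Finset.Icc 1 t) t ω = r}])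
      = (((n : ℝ) + 1) * ((n : ℝ) + 2) / (((t : ℝ) + 1) * ((t : ℝ) + 2)))
        * (r : ℝ) * ((r : ℝ) + ((n : ℝ) - (t : ℝ)) / ((n : ℝ) + 2)) := by
  obtain ⟨hr1, hrt⟩ := hr
  have htI : t ∈ Set.Icc 1 n := ⟨ht1, htn⟩
  have htI' : t ∈ Set.Icc 1 n := ⟨ht1, htn⟩
  have hBsub : ↑(Finset.Icc 1 t) ⊆ Set.Icc 1 n := by
    rw [Finset.coe_Icc]
    exact Set.Icc_subset_Icc le_rfl htn
  have hBcard : (Finset.Icc 1 t).card = t := by rw [Nat.card_Icc]; omega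
  have htB : t ∈ Finset.Icc 1 t := Finset.mem_Icc.mpr ⟨ht1, le_rfl⟩
  have hmt : Measurable (X t) := hX.1 t htI'
  have hBmeas : ∀ j ∈ Finset.Icc 1 t, Measurable (X j) := fun j hj => hX.1 j (hBsub hj)
  set E : Set Ω := {ω | rnk X (Finset.Icc 1 t) t ω = r} with hE_def
  have hEmeas : MeasurableSet E := measurableSet_rnk_eq hmt hBmeas r
  have hE : μ E = (t : ℝ≥0∞)⁻¹ := by
    have := rank_uniform hX (Finset.Icc 1 t) hBsub htB hr1 (by rw [hBcard]; exact hrt)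
    rwa [hBcard] at this
  -- fresh indices
  have hS'card : (Finset.Icc (t+1) n).card = n - t := by rw [Nat.card_Icc]; omega
  have hS'I : ∀ j ∈ Finset.Icc (t+1) n, j ∈ Set.Icc 1 n := by
    intro j hj
    rcases Finset.mem_Icc.mp hj with ⟨h1, h2⟩
    exact ⟨by omega, h2⟩
  have hS'B : ∀ j ∈ Finset.Icc (t+1) n, j ∉ Finset.Icc 1 t := by
    intro j hj hjB
    rcases Finset.mem_Icc.mp hj with ⟨h1, _⟩
    rcases Finset.mem_Icc.mp hjB with ⟨_, h2⟩
    omega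
  have hS'meas : ∀ j ∈ Finset.Icc (t+1) n, Measurable (X j) := fun j hj => hX.1 j (hS'I j hj)
  set Cset : ℕ → Set Ω := fun j => {ω | X t ω ≤ X j ω} with hCset_def
  have hCmeas : ∀ j ∈ Finset.Icc (t+1) n, MeasurableSet (Cset j) :=
    fun j hj => measurableSet_le hmt (hS'meas j hj)
  set ind : ℕ → Ω → ℝ := fun j => (Cset j).indicator (fun _ => (1:ℝ)) with hind_def
  -- pointwise identity on E
  have hsplitIcc : Finset.Icc 1 n = Finset.Icc 1 t ∪ Finset.Icc (t+1) n := by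
    ext x
    simp only [Finset.mem_union, Finset.mem_Icc]
    omega
  have hrnksplit : ∀ ω, rnk X (Finset.Icc 1 n) t ω
      = rnk X (Finset.Icc 1 t) t ω + rnk X (Finset.Icc (t+1) n) t ω := by
    intro ω
    unfold rnk
    rw [hsplitIcc, Finset.filter_union, Finset.card_union_of_disjoint]
    exact Finset.disjoint_filter_filter (by
      refine Finset.disjoint_left.mpr fun x hx1 hx2 => ?_
      rcases Finset.mem_Icc.mp hx1 with ⟨_, h1⟩
      rcases Finset.mem_Icc.mp hx2 with ⟨h2, _⟩
      omega)
  have hKrep : ∀ ω, (rnk X (Finset.Icc (t+1) n) t ω : ℝ)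
      = ∑ j ∈ Finset.Icc (t+1) n, ind j ω := by
    intro ω
    rw [rnk_eq_sum, Nat.cast_sum]
    refine Finset.sum_congr rfl fun j _ => ?_
    simp [hind_def, hCset_def, Set.indicator_apply]
  have hgE : Set.EqOn (fun ω => ((rnk X (Finset.Icc 1 n) t ω : ℝ)) ^ 2)
      (fun ω => ((r:ℝ) + ∑ j ∈ Finset.Icc (t+1) n, ind j ω) ^ 2) E := by
    intro ω hω
    have hωE : rnk X (Finset.Icc 1 t) t ω = r := hω
    simp only
    rw [← hKrep, hrnksplit, hωE]
    push_cast
    ring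
  -- compute the conditional integral
  show ∫ ω, ((rnk X (Finset.Icc 1 n) t ω : ℝ)) ^ 2
      ∂((μ E)⁻¹ • μ.restrict E) = _
  rw [integral_smul_measure, hE, inv_inv]
  have hTR : ((t : ℝ≥0∞)).toReal = (t:ℝ) := by simp
  rw [hTR]
  -- rewrite the set integral
  have hint1 : ∫ ω, ((rnk X (Finset.Icc 1 n) t ω : ℝ)) ^ 2 ∂(μ.restrict E)
      = ∫ ω, ((r:ℝ) + ∑ j ∈ Finset.Icc (t+1) n, ind j ω) ^ 2 ∂(μ.restrict E) :=
    setIntegral_congr_fun hEmeas hgE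
  rw [hint1]
  -- expand the square
  have hmulind : ∀ j j', (fun ω => ind j ω * ind j' ω)
      = (Cset j ∩ Cset j').indicator (fun _ => (1:ℝ)) := by
    intro j j'
    funext ω
    rw [hind_def]
    simp only
    rw [← Set.inter_indicator_mul]
    simp
  have hexp : (fun ω => ((r:ℝ) + ∑ j ∈ Finset.Icc (t+1) n, ind j ω) ^ 2)
      = fun ω => ((r:ℝ)^2 + ∑ j ∈ Finset.Icc (t+1) n, (2*(r:ℝ)) * ind j ω)
          + ∑ j ∈ Finset.Icc (t+1) n, ∑ j' ∈ Finset.Icc (t+1) n,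
              (Cset j ∩ Cset j').indicator (fun _ => (1:ℝ)) ω := by
    funext ω
    have h1 : ∑ j ∈ Finset.Icc (t+1) n, ∑ j' ∈ Finset.Icc (t+1) n,
        (Cset j ∩ Cset j').indicator (fun _ => (1:ℝ)) ω
        = (∑ j ∈ Finset.Icc (t+1) n, ind j ω) * (∑ j' ∈ Finset.Icc (t+1) n, ind j' ω) := by
      rw [Finset.sum_mul_sum]
      exact Finset.sum_congr rfl fun j _ => Finset.sum_congr rfl fun j' _ => by
        rw [← hmulind j j']
    have h2 : ∑ j ∈ Finset.Icc (t+1) n, (2*(r:ℝ)) * ind j ω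
        = (2*(r:ℝ)) * ∑ j ∈ Finset.Icc (t+1) n, ind j ω := by
      rw [Finset.mul_sum]
    rw [h1, h2]
    ring
  rw [hexp]
  -- integrate
  have hindInt : ∀ j ∈ Finset.Icc (t+1) n, Integrable (ind j) (μ.restrict E) :=
    fun j hj => (integrable_const (1:ℝ)).indicator (hCmeas j hj)
  have hconstInt : Integrable (fun _ : Ω => (r:ℝ)^2) (μ.restrict E) := integrable_const _
  have hsum2Int : Integrable (fun ω => ∑ j ∈ Finset.Icc (t+1) n, (2*(r:ℝ)) * ind j ω)
      (μ.restrict E) :=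
    integrable_finset_sum _ fun j hj => (hindInt j hj).const_mul _
  have hsum3Int : Integrable (fun ω => ∑ j ∈ Finset.Icc (t+1) n, ∑ j' ∈ Finset.Icc (t+1) n,
      (Cset j ∩ Cset j').indicator (fun _ => (1:ℝ)) ω) (μ.restrict E) :=
    integrable_finset_sum _ fun j hj => integrable_finset_sum _ fun j' hj' =>
      (integrable_const (1:ℝ)).indicator ((hCmeas j hj).inter (hCmeas j' hj'))
  have hInt12 : Integrable (fun ω => (r:ℝ)^2 + ∑ j ∈ Finset.Icc (t+1) n, (2*(r:ℝ)) * ind j ω)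
      (μ.restrict E) := hconstInt.add hsum2Int
  rw [integral_add hInt12 hsum3Int, integral_add hconstInt hsum2Int]
  rw [integral_finset_sum _ (fun j hj => (hindInt j hj).const_mul _)]
  rw [integral_finset_sum _ (fun j hj => integrable_finset_sum _ fun j' hj' =>
      (integrable_const (1:ℝ)).indicator ((hCmeas j hj).inter (hCmeas j' hj')))]

  -- values of the integrals
  have hI0 : ∫ (_ : Ω) in E, (r:ℝ)^2 ∂μ = ((t:ℝ))⁻¹ * (r:ℝ)^2 := by
    rw [setIntegral_const, measureReal_def, hE]
    rw [ENNReal.toReal_inv, ENNReal.toReal_natCast, smul_eq_mul]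
  have hq : ∀ j ∈ Finset.Icc (t+1) n,
      (μ (Cset j ∩ E)).toReal = (r:ℝ) / ((t:ℝ) * ((t:ℝ) + 1)) := by
    intro j hj
    have hval := q_lemma hX hBsub htB (hS'I j hj) (hS'B j hj) r (by rw [hBcard]; exact hrt)
    rw [hBcard] at hval
    have hsets : Cset j ∩ E = {ω | rnk X (Finset.Icc 1 t) t ω = r} ∩ {ω | X t ω ≤ X j ω} := by
      rw [hE_def, hCset_def]
      exact Set.inter_comm _ _
    rw [hsets, hval]
  have hu : ∀ j ∈ Finset.Icc (t+1) n, ∀ j' ∈ Finset.Icc (t+1) n, j ≠ j' →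
      (μ ((Cset j ∩ Cset j') ∩ E)).toReal
        = ((r:ℝ) * ((r:ℝ) + 1)) / ((t:ℝ) * ((t:ℝ) + 1) * ((t:ℝ) + 2)) := by
    intro j hj j' hj' hne
    have hval := u_lemma hX hBsub htB (hS'I j hj) (hS'I j' hj') (hS'B j hj) (hS'B j' hj')
      hne r (by rw [hBcard]; exact hrt)
    rw [hBcard] at hval
    have hsets : (Cset j ∩ Cset j') ∩ E
        = ({ω | rnk X (Finset.Icc 1 t) t ω = r} ∩ {ω | X t ω ≤ X j' ω})
            ∩ {ω | X t ω ≤ X j ω} := by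
      rw [hE_def, hCset_def]
      ext ω
      simp only [Set.mem_inter_iff, Set.mem_setOf_eq]
      tauto
    rw [hsets, hval]
  have hI1 : ∀ j ∈ Finset.Icc (t+1) n,
      ∫ a in E, 2 * (r:ℝ) * ind j a ∂μ
        = 2 * (r:ℝ) * ((r:ℝ) / ((t:ℝ) * ((t:ℝ) + 1))) := by
    intro j hj
    rw [integral_const_mul]
    congr 1
    rw [hind_def]
    simp only
    rw [integral_indicator_const (1:ℝ) (hCmeas j hj), measureReal_def, Measure.restrict_apply (hCmeas j hj),
      smul_eq_mul, mul_one, hq j hj]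
  have hI2 : ∀ j ∈ Finset.Icc (t+1) n,
      ∫ a in E, ∑ j' ∈ Finset.Icc (t+1) n, (Cset j ∩ Cset j').indicator (fun _ => (1:ℝ)) a ∂μ
        = (r:ℝ) / ((t:ℝ) * ((t:ℝ) + 1))
          + (((n:ℝ) - (t:ℝ)) - 1) * (((r:ℝ) * ((r:ℝ) + 1)) / ((t:ℝ) * ((t:ℝ) + 1) * ((t:ℝ) + 2))) := by
    intro j hj
    rw [integral_finset_sum _ (fun j' hj' =>
      (integrable_const (1:ℝ)).indicator ((hCmeas j hj).inter (hCmeas j' hj')))]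
    have hterm : ∀ j' ∈ Finset.Icc (t+1) n,
        ∫ a in E, (Cset j ∩ Cset j').indicator (fun _ => (1:ℝ)) a ∂μ
          = (μ ((Cset j ∩ Cset j') ∩ E)).toReal := by
      intro j' hj'
      rw [integral_indicator_const (1:ℝ) ((hCmeas j hj).inter (hCmeas j' hj')),
        measureReal_def, Measure.restrict_apply ((hCmeas j hj).inter (hCmeas j' hj')), smul_eq_mul, mul_one]
    rw [Finset.sum_congr rfl hterm]
    rw [← Finset.add_sum_erase _ _ hj]
    have hself : (μ ((Cset j ∩ Cset j) ∩ E)).toReal = (r:ℝ) / ((t:ℝ) * ((t:ℝ) + 1)) := by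
      rw [Set.inter_self]
      exact hq j hj
    have hoff : ∀ j' ∈ (Finset.Icc (t+1) n).erase j,
        (μ ((Cset j ∩ Cset j') ∩ E)).toReal
          = ((r:ℝ) * ((r:ℝ) + 1)) / ((t:ℝ) * ((t:ℝ) + 1) * ((t:ℝ) + 2)) := by
      intro j' hj'
      exact hu j hj j' (Finset.mem_of_mem_erase hj') (Ne.symm (Finset.ne_of_mem_erase hj'))
    rw [hself, Finset.sum_congr rfl hoff, Finset.sum_const,
      Finset.card_erase_of_mem hj, hS'card, nsmul_eq_mul]
    have hcardpos : 1 ≤ n - t := by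
      have := Finset.card_pos.mpr ⟨j, hj⟩
      omega
    have hcast : ((n - t - 1 : ℕ) : ℝ) = ((n:ℝ) - (t:ℝ)) - 1 := by
      have h1 : ((n - t - 1 : ℕ) : ℝ) = ((n - t : ℕ) : ℝ) - 1 := by
        rw [Nat.cast_sub hcardpos]; norm_num
      rw [h1, Nat.cast_sub htn]
    rw [hcast]
  rw [Finset.sum_congr rfl hI1, Finset.sum_congr rfl hI2, hI0]
  rw [Finset.sum_const, Finset.sum_const, hS'card, nsmul_eq_mul, nsmul_eq_mul]
  have hcast2 : ((n - t : ℕ) : ℝ) = (n:ℝ) - (t:ℝ) := Nat.cast_sub htn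
  rw [hcast2, smul_eq_mul]
  have htpos : (1:ℝ) ≤ (t:ℝ) := by exact_mod_cast ht1
  have htn' : (t:ℝ) ≤ (n:ℝ) := by exact_mod_cast htn
  have ht0 : (t:ℝ) ≠ 0 := by linarith
  have ht1' : (t:ℝ) + 1 ≠ 0 := by linarith
  have ht2' : (t:ℝ) + 2 ≠ 0 := by linarith
  have hn2 : (n:ℝ) + 2 ≠ 0 := by linarith
  field_simp
  ring


end Helpers

/-- conditional second moment of the absolute rank:
`E[A_{t,n}² | R_t = r] = [(n+1)(n+2)/((t+1)(t+2))] · r · (r + (n−t)/(n+2))`. -/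
theorem stmt_14 {Ω : Type*} [MeasurableSpace Ω] (μ : Measure Ω) [IsProbabilityMeasure μ]
    (n : ℕ) (X : ℕ → Ω → ℝ) (hX : IIDContinuousOn X (Set.Icc 1 n) μ)
    (t : ℕ) (ht1 : 1 ≤ t) (htn : t ≤ n)
    (r : ℕ) (hr : r ∈ Set.Icc 1 t) :
    ∫ ω, ((absRank X t n ω : ℝ)) ^ 2 ∂(μ[|{ω | relRank X t ω = r}])
      = (((n : ℝ) + 1) * ((n : ℝ) + 2) / (((t : ℝ) + 1) * ((t : ℝ) + 2)))
        * (r : ℝ) * ((r : ℝ) + ((n : ℝ) - (t : ℝ)) / ((n : ℝ) + 2)) :=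
  stmt_14' μ n X hX t ht1 htn r hr
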